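/- There do not exist a prime power q ≥ 3, integers m ≥ 2k ≥ 6, a prime power q̄, and integer k' such that (q^m − 1, q^k, q) = ((q̄^2 − 1), q̄ − 2, 3). In particular, if q = 3 and q̄ = 3^k + 2, then 3^m − 1 ≠ (3^k + 2)^2 − 1. -/
import Mathlib


lemma aux14 (m k : ℕ) (hk : 3 ≤ k) (hm : 2 * k ≤ m) :
    3 ^ m - 1 ≠ (3 ^ k + 2) ^ 2 - 1 := by
  intro h
  have h1 : 1 ≤ 3 ^ m := Nat.one_le_pow _ _ (by norm_num)
  have h2 : 1 ≤ (3 ^ k + 2) ^ 2 := Nat.one_le_pow _ _ (by positivity)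
  have heq : 3 ^ m = (3 ^ k + 2) ^ 2 := by omega
  have hkm : 3 ^ k = 3 * 3 ^ (k - 1) := by
    rw [← pow_succ']; congr 1; omega
  have hmm : 3 ^ m = 3 * 3 ^ (m - 1) := by
    rw [← pow_succ']; congr 1; omega
  set a := 3 ^ (k - 1)
  set b := 3 ^ (m - 1)
  have : 3 * b = (3 * a + 2) ^ 2 := by rw [← hkm, ← hmm]; exact heq
  have hexp : (3 * a + 2) ^ 2 = 9 * a ^ 2 + 12 * a + 4 := by ring
  have hc : 3 * b = 9 * a ^ 2 + 12 * a + 4 := by omega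
  set c := a ^ 2
  omega

/-- There are no prime power `q ≥ 3`, integers `m ≥ 2k ≥ 6` and prime power `q̄` with
`(q^m − 1, q^k, q) = (q̄^2 − 1, q̄ − 2, 3)`. In particular, if `q = 3` and
`q̄ = 3^k + 2`, then `3^m − 1 ≠ (3^k + 2)^2 − 1`. -/
theorem stmt_14 :
    (¬ ∃ q m k qb : ℕ, IsPrimePow q ∧ 3 ≤ q ∧ 3 ≤ k ∧ 2 * k ≤ m ∧ IsPrimePow qb ∧
        q ^ m - 1 = qb ^ 2 - 1 ∧ q ^ k = qb - 2 ∧ q = 3) ∧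
    (∀ m k : ℕ, 3 ≤ k → 2 * k ≤ m → 3 ^ m - 1 ≠ (3 ^ k + 2) ^ 2 - 1) := by
  constructor
  · rintro ⟨q, m, k, qb, _, _, hk, hm, _, h1, h2, rfl⟩
    have hqb : qb = 3 ^ k + 2 := by
      have : 1 ≤ 3 ^ k := Nat.one_le_pow _ _ (by norm_num)
      omega
    exact aux14 m k hk hm (by rw [← hqb]; exact h1)
  · exact aux14
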